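/- Let ρ be the real root of t³ − t − 1 (the plastic constant). Then for every N₀ there exist infinitely many m ≥ N₀ with ⌊ρ^{m+4}⌋ + ⌊ρ^m⌋ = ⌊ρ^{m+3}⌋ + ⌊ρ^{m+2}⌋; in particular, {⌊ρ^n⌋ : n ≥ N₀} is not a Sidon set for any N₀. -/

import Mathlib

private def perrin : ℕ → ℤ
  | 0 => 3
  | 1 => 0
  | 2 => 2
  | n+3 => perrin (n+1) + perrin n

private lemma perrin_add3 (n : ℕ) : perrin (n+3) = perrin (n+1) + perrin n := rfl

set_option maxHeartbeats 1000000 in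
theorem stmt_17 (ρ : ℝ) (hρ : ρ ^ 3 - ρ - 1 = 0) :
    (∀ N₀ : ℕ,
      {m : ℕ | N₀ ≤ m ∧
        ⌊ρ ^ (m + 4)⌋ + ⌊ρ ^ m⌋ = ⌊ρ ^ (m + 3)⌋ + ⌊ρ ^ (m + 2)⌋}.Infinite) ∧
    (∀ N₀ : ℕ, ¬ (∀ a b c d : ℤ,
        (∃ p : ℕ, N₀ ≤ p ∧ a = ⌊ρ ^ p⌋) →
        (∃ q : ℕ, N₀ ≤ q ∧ b = ⌊ρ ^ q⌋) →
        (∃ r : ℕ, N₀ ≤ r ∧ c = ⌊ρ ^ r⌋) →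
        (∃ s : ℕ, N₀ ≤ s ∧ d = ⌊ρ ^ s⌋) →
        a + b = c + d → ({a, b} : Set ℤ) = ({c, d} : Set ℤ))) := by
  classical
  have hρ3 : ρ ^ 3 = ρ + 1 := by linarith
  have hl : (13/10 : ℝ) < ρ := by
    nlinarith [sq_nonneg (ρ + 13/20), sq_nonneg ρ, sq_nonneg (ρ-13/10)]
  have hρ0 : (0:ℝ) < ρ := by linarith
  have hρ1 : (1:ℝ) < ρ := by linarith
  have hρ0' : ρ ≠ 0 := ne_of_gt hρ0
  -- ## the complex root α
  have hd : (0:ℝ) ≤ 4/ρ - ρ^2 := by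
    have h4 : ρ^3 ≤ 4 := by nlinarith [hρ3, hl, sq_nonneg (ρ-3)]
    have heq : 4/ρ - ρ^2 = (4 - ρ^3)/ρ := by field_simp
    rw [heq]
    exact div_nonneg (by linarith) (le_of_lt hρ0)
  obtain ⟨r, hr⟩ : ∃ r : ℝ, r * r = 4/ρ - ρ^2 := ⟨Real.sqrt _, Real.mul_self_sqrt hd⟩
  have hrρ : (r * r) * ρ = 4 - ρ^2 * ρ := by rw [hr]; field_simp
  set α : ℂ := ⟨-ρ/2, r/2⟩ with hα
  have hquad : (ρ:ℂ)*α^2 + (ρ:ℂ)^2*α + 1 = 0 := by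
    rw [Complex.ext_iff]
    constructor
    · simp only [hα, pow_two, Complex.add_re, Complex.mul_re, Complex.mul_im,
        Complex.ofReal_re, Complex.ofReal_im, Complex.one_re, Complex.zero_re]
      ring_nf
      linear_combination (-(1:ℝ)/4) * hrρ
    · simp only [hα, pow_two, Complex.add_im, Complex.mul_re, Complex.mul_im,
        Complex.ofReal_re, Complex.ofReal_im, Complex.one_im, Complex.zero_im]
      ring
  have hρc : ((ρ:ℂ))^3 - (ρ:ℂ) - 1 = 0 := by exact_mod_cast congrArg Complex.ofReal hρ
  have hρc0 : (ρ:ℂ) ≠ 0 := by exact_mod_cast hρ0'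
  have hα3 : α^3 = α + 1 :=
    mul_left_cancel₀ hρc0 (by linear_combination (α - (ρ:ℂ)) * hquad + α * hρc)
  have hnormsq : Complex.normSq α = 1/ρ := by
    simp only [Complex.normSq_mk, hα]
    have h2 : r/2 * (r/2) = (4/ρ - ρ^2)/4 := by linear_combination (1/4:ℝ) * hr
    rw [h2]
    field_simp
    ring
  have hre0 : (α^0).re = 1 := by norm_num
  have hre1 : 2*(α^1).re = -ρ := by
    rw [pow_one, hα]
    simp
    ring
  have hre2 : 2*(α^2).re = 2 - ρ^2 := by
    have h : (α^2).re = (-ρ/2)*(-ρ/2) - (r/2)*(r/2) := by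
      rw [pow_two]
      simp [hα, Complex.mul_re]
    have h6 : ρ * (2*((α^2).re)) = ρ * (2 - ρ^2) := by
      rw [h]; linear_combination (-(1:ℝ)/2)*hrρ + 2*hρ
    exact mul_left_cancel₀ hρ0' h6
  -- ## the error sequence e
  obtain ⟨e, he⟩ : ∃ e : ℕ → ℝ, ∀ n, e n = (perrin n : ℝ) - ρ^n :=
    ⟨fun n => (perrin n : ℝ) - ρ^n, fun _ => rfl⟩
  have he_rec : ∀ n, e (n+3) = e (n+1) + e n := by
    intro n
    rw [he, he, he, perrin_add3]
    push_cast
    have h : ρ^(n+3) = ρ^(n+1) + ρ^n := by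
      have h' : ρ^(n+3) = ρ^n * ρ^3 := by ring
      rw [h', hρ3]; ring
    rw [h]; ring
  have hαrec : ∀ n, α^(n+3) = α^(n+1) + α^n := by
    intro n
    have h : α^(n+3) = α^n * α^3 := by ring
    rw [h, hα3]; ring
  have key : ∀ n, e n = 2*(α^n).re := by
    have H : ∀ n, e n = 2*(α^n).re ∧ e (n+1) = 2*(α^(n+1)).re ∧ e (n+2) = 2*(α^(n+2)).re := by
      intro n
      induction n with
      | zero =>
        have h1 : 2*(α^(0+1)).re = -ρ := hre1
        have h2 : 2*(α^(0+1+1)).re = 2 - ρ^2 := by rw [show 0+1+1 = 2 from rfl]; exact hre2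
        refine ⟨?_, ?_, ?_⟩
        · rw [he]; simp only [perrin, pow_zero, hre0]; norm_num
        · rw [he]; simp only [perrin]; push_cast; linarith [h1]
        · rw [he]; simp only [perrin]; push_cast; linarith [h2]
      | succ n ih =>
        refine ⟨ih.2.1, ih.2.2, ?_⟩
        have h : n + 1 + 2 = n + 3 := by ring
        rw [h, he_rec n, hαrec n, Complex.add_re, ih.1, ih.2.1]
        ring
    exact fun n => (H n).1
  have he_sq : ∀ n, (e n)^2 ≤ 4 * (1/ρ)^n := by
    intro n
    rw [key n]
    have h1 : ((α^n).re)^2 ≤ Complex.normSq (α^n) := by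
      rw [Complex.normSq_apply]; nlinarith [sq_nonneg (α^n).im, sq_nonneg (α^n).re]
    have h2 : Complex.normSq (α^n) = (1/ρ)^n := by rw [map_pow, hnormsq]
    nlinarith [h1, h2]
  clear key hαrec hnormsq hre0 hre1 hre2 hα3 hρc hρc0 hquad hα
  clear_value α
  clear α hrρ hr hd
  -- ## basic bounds
  have hρ9 : (4:ℝ) < ρ^9 := by
    have h : ρ^9 = (ρ^3)^3 := by ring
    rw [h, hρ3]; nlinarith
  have hpow9 : ∀ n, 9 ≤ n → (4:ℝ) < ρ^n := fun n hn =>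
    lt_of_lt_of_le hρ9 (pow_le_pow_right₀ (le_of_lt hρ1) hn)
  have hesmall : ∀ n, 9 ≤ n → -1 < e n ∧ e n < 1 := by
    intro n hn
    have h1 := he_sq n
    have h2 : (1/ρ:ℝ)^n = 1/ρ^n := by rw [one_div, one_div, inv_pow]
    have h3 : (4:ℝ) < ρ^n := hpow9 n hn
    have h4 : (e n)^2 < 1 := by
      rw [h2] at h1
      have h5 : 4 * (1/ρ^n) < 1 := by
        rw [mul_one_div, div_lt_one (by linarith)]; linarith
      linarith
    constructor <;> nlinarith [h4]
  -- ## sign indicator and floor formula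
  obtain ⟨σ, hσ⟩ : ∃ σ : ℕ → ℤ, ∀ n, σ n = if 0 < e n then 1 else 0 :=
    ⟨fun n => if 0 < e n then 1 else 0, fun _ => rfl⟩
  have σ_congr : ∀ {j k}, (0 < e j ↔ 0 < e k) → σ j = σ k := by
    intro j k h
    simp only [hσ]
    by_cases hj : 0 < e j
    · rw [if_pos hj, if_pos (h.mp hj)]
    · rw [if_neg hj, if_neg (fun hk => hj (h.mpr hk))]
  have σ_anti : ∀ {j k}, ¬(0 < e j ↔ 0 < e k) → σ j + σ k = 1 := by
    intro j k h
    simp only [hσ]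
    by_cases hj : 0 < e j <;> by_cases hk : 0 < e k <;>
      simp [hj, hk] at h ⊢
  have hfloor : ∀ n, 9 ≤ n → ⌊ρ^n⌋ = perrin n - σ n := by
    intro n hn
    obtain ⟨h1, h2⟩ := hesmall n hn
    have hrn : ρ^n = (perrin n : ℝ) - e n := by rw [he n]; ring
    by_cases hp : 0 < e n
    · have hs : σ n = 1 := by simp [hσ, hp]
      rw [hs, Int.floor_eq_iff]
      constructor
      · push_cast; linarith [hrn]
      · push_cast; linarith [hrn]
    · have hs : σ n = 0 := by simp [hσ, hp]
      have hp' : e n ≤ 0 := le_of_not_gt hp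
      rw [hs, Int.floor_eq_iff]
      constructor
      · push_cast; linarith [hrn]
      · push_cast; linarith [hrn]
  have R : ∀ k, (0 < e k ↔ 0 < e (k+1)) → (0 < e (k+3) ↔ 0 < e k) := by
    intro k h
    rw [he_rec k]
    constructor
    · intro h3
      by_contra hk
      have hk' : e k ≤ 0 := le_of_not_gt hk
      have hk1 : e (k+1) ≤ 0 := le_of_not_gt (fun h1 => hk (h.mpr h1))
      linarith
    · intro hk
      have hk1 : 0 < e (k+1) := h.mp hk
      linarith
  -- ## main existence lemma for the sign identity
  have hmain : ∀ N : ℕ, ∃ m, N ≤ m ∧ σ (m+4) + σ m = σ (m+3) + σ (m+2) := by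
    intro N
    by_cases hex : ∃ n, N ≤ n ∧ (0 < e n ↔ 0 < e (n+1))
    · obtain ⟨n, hn, hnn⟩ := hex
      have h3 : 0 < e (n+3) ↔ 0 < e n := R n hnn
      by_cases b2 : 0 < e (n+2) ↔ 0 < e n
      · have h4 : 0 < e (n+4) ↔ 0 < e n := by
          have h := R (n+1) (hnn.symm.trans b2.symm)
          exact (show (0 < e (n+4) ↔ 0 < e (n+1)) from h).trans hnn.symm
        refine ⟨n, hn, ?_⟩
        have e1 := σ_congr h4
        have e2 := σ_congr h3
        have e3 := σ_congr b2
        omega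
      · by_cases b4 : 0 < e (n+4) ↔ 0 < e n
        · have h34 : 0 < e (n+3) ↔ 0 < e (n+4) := h3.trans b4.symm
          have h6 : 0 < e (n+6) ↔ 0 < e n := by
            have h := R (n+3) h34
            exact (show (0 < e (n+6) ↔ 0 < e (n+3)) from h).trans h3
          by_cases b5 : 0 < e (n+5) ↔ 0 < e n
          · refine ⟨n+1, by omega, ?_⟩
            show σ (n+5) + σ (n+1) = σ (n+4) + σ (n+3)
            have e1 := σ_congr (b5.trans hnn)
            have e2 := σ_congr (b4.trans hnn)
            have e3 := σ_congr (h3.trans hnn)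
            omega
          · refine ⟨n+2, by omega, ?_⟩
            show σ (n+6) + σ (n+2) = σ (n+5) + σ (n+4)
            have e1 := σ_congr h6
            have e2 := σ_congr b4
            have a1 := σ_anti b2
            have a2 := σ_anti b5
            omega
        · refine ⟨n, hn, ?_⟩
          have a1 := σ_anti b4
          have e2 := σ_congr h3
          have a3 := σ_anti b2
          omega
    · exfalso
      have halt : ∀ n, N ≤ n → ¬(0 < e n ↔ 0 < e (n+1)) := fun n hn h => hex ⟨n, hn, h⟩
      obtain ⟨n₀, hn₀N, hn₀⟩ : ∃ n₀, N ≤ n₀ ∧ 0 < e n₀ := by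
        by_cases h : 0 < e N
        · exact ⟨N, le_rfl, h⟩
        · refine ⟨N+1, by omega, ?_⟩
          by_contra h1
          exact halt N le_rfl (iff_of_false h h1)
      have hpat : ∀ j, (Even j → 0 < e (n₀+j)) ∧ (¬ Even j → e (n₀+j) ≤ 0) := by
        intro j
        induction j with
        | zero => exact ⟨fun _ => hn₀, fun h => absurd Even.zero h⟩
        | succ j ih =>
          have hne := halt (n₀+j) (by omega)
          constructor
          · intro hev
            have hjodd : ¬ Even j := by
              rw [Nat.even_add_one] at hev; exact hev
            have h1 : e (n₀+j) ≤ 0 := ih.2 hjodd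
            by_contra h2
            exact hne (iff_of_false (not_lt.mpr h1) h2)
          · intro hodd
            have hjev : Even j := by
              rw [Nat.even_add_one] at hodd; exact not_not.mp hodd
            have h1 : 0 < e (n₀+j) := ih.1 hjev
            by_contra h2
            push_neg at h2
            exact hne (iff_of_true h1 h2)
      have hnn : ∀ j, 0 ≤ (-1:ℝ)^j * e (n₀+j) := by
        intro j
        by_cases hj : Even j
        · rw [hj.neg_one_pow]
          have := (hpat j).1 hj; linarith
        · rw [(Nat.not_even_iff_odd.mp hj).neg_one_pow]
          have := (hpat j).2 hj; linarith
      have hstep : ∀ j, (-1:ℝ)^j * e (n₀+j) ≤ (-1)^(j+1) * e (n₀+(j+1)) := by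
        intro j
        have hrec := he_rec (n₀+j)
        have h3 := hnn (j+3)
        have hid : (-1:ℝ)^(j+1) * e (n₀+(j+1)) =
            (-1)^j * e (n₀+j) + (-1)^(j+3) * e (n₀+(j+3)) := by
          rw [show n₀+(j+3) = n₀+j+3 by omega, hrec, show n₀+j+1 = n₀+(j+1) by omega]
          ring
        linarith
      have hmono : ∀ j, e n₀ ≤ (-1:ℝ)^j * e (n₀+j) := by
        intro j
        induction j with
        | zero => simp
        | succ j ih => exact le_trans ih (hstep j)
      obtain ⟨j, hj⟩ := pow_unbounded_of_one_lt (4 / (e n₀)^2) hρ1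
      have h1 : (e n₀)^2 ≤ ((-1:ℝ)^j * e (n₀+j))^2 := by
        nlinarith [hmono j, hn₀]
      have h2 : ((-1:ℝ)^j * e (n₀+j))^2 = (e (n₀+j))^2 := by
        have hsq1 : ((-1:ℝ)^j)^2 = 1 := by
          rw [← pow_mul, mul_comm, pow_mul]; norm_num
        rw [mul_pow, hsq1, one_mul]
      have h3 := he_sq (n₀+j)
      have h4 : (1/ρ:ℝ)^(n₀+j) ≤ (1/ρ)^j :=
        pow_le_pow_of_le_one (by positivity) (by rw [div_le_one hρ0]; linarith) (by omega)
      have h5 : (4:ℝ) * (1/ρ)^j = 4/ρ^j := by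
        rw [one_div, inv_pow, div_eq_mul_inv]
      have h6 : (4:ℝ)/ρ^j < (e n₀)^2 := by
        rw [div_lt_iff₀ (pow_pos hρ0 j)]
        rw [div_lt_iff₀ (by positivity)] at hj
        linarith
      linarith [h1, h2.symm ▸ h1]
  -- ## key existence lemma for the floor identity
  have hkey : ∀ N : ℕ, ∃ m, N ≤ m ∧ 9 ≤ m ∧
      ⌊ρ ^ (m + 4)⌋ + ⌊ρ ^ m⌋ = ⌊ρ ^ (m + 3)⌋ + ⌊ρ ^ (m + 2)⌋ := by
    intro N
    obtain ⟨m, hm, hid⟩ := hmain (max N 9)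
    have hm9 : 9 ≤ m := le_trans (le_max_right N 9) hm
    refine ⟨m, le_trans (le_max_left N 9) hm, hm9, ?_⟩
    have f0 := hfloor m hm9
    have f2 := hfloor (m+2) (by omega)
    have f3 := hfloor (m+3) (by omega)
    have f4 := hfloor (m+4) (by omega)
    have p1 : perrin (m+4) = perrin (m+2) + perrin (m+1) := perrin_add3 (m+1)
    have p2 : perrin (m+3) = perrin (m+1) + perrin m := perrin_add3 m
    omega
  constructor
  · -- part 1: infinitude
    intro N₀
    by_contra hfin
    rw [Set.not_infinite] at hfin
    obtain ⟨B, hB⟩ := hfin.bddAbove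
    obtain ⟨m, hm1, _, hm3⟩ := hkey (max (B+1) N₀)
    have hmem : m ∈ {m : ℕ | N₀ ≤ m ∧
        ⌊ρ ^ (m + 4)⌋ + ⌊ρ ^ m⌋ = ⌊ρ ^ (m + 3)⌋ + ⌊ρ ^ (m + 2)⌋} :=
      ⟨le_trans (le_max_right _ _) hm1, hm3⟩
    have := hB hmem
    have : max (B+1) N₀ ≤ m := hm1
    omega
  · -- part 2: not Sidon
    intro N₀ h
    obtain ⟨m, hm1, hm9, hm3⟩ := hkey N₀
    have heq := h ⌊ρ ^ (m+4)⌋ ⌊ρ ^ m⌋ ⌊ρ ^ (m+3)⌋ ⌊ρ ^ (m+2)⌋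
      ⟨m+4, by omega, rfl⟩ ⟨m, hm1, rfl⟩ ⟨m+3, by omega, rfl⟩ ⟨m+2, by omega, rfl⟩ hm3
    have hm4 : ρ^(m+3) + 1 ≤ ρ^(m+4) := by
      have h4 : (4:ℝ) < ρ^(m+3) := hpow9 (m+3) (by omega)
      have hpr : ρ^(m+4) = ρ^(m+3)*ρ := by ring
      nlinarith [h4, hl, hpr]
    have hlt1 : ⌊ρ^(m+3)⌋ < ⌊ρ^(m+4)⌋ := by
      have h1 : ⌊ρ^(m+3)⌋ + 1 ≤ ⌊ρ^(m+4)⌋ := by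
        rw [Int.le_floor]
        push_cast
        linarith [Int.floor_le (ρ^(m+3))]
      omega
    have hle : ⌊ρ^(m+2)⌋ ≤ ⌊ρ^(m+3)⌋ :=
      Int.floor_le_floor (pow_le_pow_right₀ (le_of_lt hρ1) (by omega))
    have hmem : ⌊ρ^(m+4)⌋ ∈ ({⌊ρ^(m+3)⌋, ⌊ρ^(m+2)⌋} : Set ℤ) := by
      rw [← heq]; exact Set.mem_insert _ _
    simp only [Set.mem_insert_iff, Set.mem_singleton_iff] at hmem
    omega
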